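/- Let φ be a lower semicontinuous submeasure on ℕ with φ(ℕ) < ∞ such that the ideal I_φ = {A : ‖A‖_φ = 0} is not F_σ. Then there exists a partition {A_n : n ∈ ℕ} of ℕ such that ‖A_n‖_φ > 0 for all n and lim_n ‖⋃_{k>n} A_k‖_φ = 0. -/

import Mathlib

open Filter Topology Set
open scoped ENNReal

/-- An ideal on ℕ: contains all finite sets, closed under subsets and finite
unions, and proper. -/
def IsIdeal (I : Set (Set ℕ)) : Prop :=
  (∀ A : Set ℕ, A.Finite → A ∈ I) ∧
  (∀ A B : Set ℕ, A ⊆ B → B ∈ I → A ∈ I) ∧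
  (∀ A B : Set ℕ, A ∈ I → B ∈ I → A ∪ B ∈ I) ∧
  (Set.univ : Set ℕ) ∉ I

/-- `ℓ` is an `I`-limit point of `x`: some subsequence indexed by a set not in
`I` converges to `ℓ`. -/
def ILimitPoint {X : Type*} [TopologicalSpace X] (I : Set (Set ℕ)) (x : ℕ → X) (ℓ : X) : Prop :=
  ∃ A : Set ℕ, A ∉ I ∧ Tendsto x (atTop ⊓ 𝓟 A) (𝓝 ℓ)

/-- `ℓ` is an `I`-cluster point of `x`. -/
def IClusterPoint {X : Type*} [TopologicalSpace X] (I : Set (Set ℕ)) (x : ℕ → X) (ℓ : X) : Prop :=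
  ∀ U ∈ 𝓝 ℓ, {n | x n ∈ U} ∉ I

/-- A lower semicontinuous submeasure on ℕ. -/
def IsLSCSubmeasure (φ : Set ℕ → ℝ≥0∞) : Prop :=
  φ ∅ = 0 ∧ (∀ A B : Set ℕ, A ⊆ B → φ A ≤ φ B) ∧
  (∀ A B : Set ℕ, φ (A ∪ B) ≤ φ A + φ B) ∧
  (∀ A : Set ℕ, Tendsto (fun n => φ (A ∩ Set.Iio n)) atTop (𝓝 (φ A)))

/-- `‖A‖_φ = lim_n φ(A \ {0,…,n-1})`, the limit of an antitone sequence,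
realized as an infimum. -/
noncomputable def phiNorm (φ : Set ℕ → ℝ≥0∞) (A : Set ℕ) : ℝ≥0∞ :=
  ⨅ n : ℕ, φ (A \ Set.Iio n)

/-- The ideal of sets of asymptotic density zero. -/
def I0 : Set (Set ℕ) :=
  {S : Set ℕ | Tendsto (fun n => (Nat.card ↥(S ∩ Set.Iio n) : ℝ) / n) atTop (𝓝 0)}

/-- `u(ℓ) := lim_k ‖{n : x n ∈ U_k}‖_φ` along a decreasing local base at `ℓ`;
its value is independent of the base and equals the infimum over all
neighborhoods. -/
noncomputable def uFun {X : Type*} [TopologicalSpace X] (φ : Set ℕ → ℝ≥0∞)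
    (x : ℕ → X) (ℓ : X) : ℝ≥0∞ :=
  ⨅ U ∈ 𝓝 ℓ, phiNorm φ {n | x n ∈ U}

/-- Isolated points of a set. -/
def isolatedPts {X : Type*} [TopologicalSpace X] (B : Set X) : Set X :=
  {b ∈ B | ∃ U ∈ 𝓝 b, U ∩ B = {b}}

section Aux

variable {φ : Set ℕ → ℝ≥0∞}

lemma phiNorm_le_phi (φ : Set ℕ → ℝ≥0∞) (A : Set ℕ) : phiNorm φ A ≤ φ A := by
  have h := iInf_le (fun n => φ (A \ Set.Iio n)) 0
  have hA : A \ Set.Iio 0 = A := by ext x; simp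
  rwa [hA] at h

lemma phiNorm_mono (hφ : IsLSCSubmeasure φ) {A B : Set ℕ} (h : A ⊆ B) :
    phiNorm φ A ≤ phiNorm φ B :=
  iInf_mono fun n => hφ.2.1 _ _ (Set.diff_subset_diff_left h)

lemma phiNorm_union_le (hφ : IsLSCSubmeasure φ) (A B : Set ℕ) :
    phiNorm φ (A ∪ B) ≤ phiNorm φ A + phiNorm φ B := by
  have key : ∀ n m : ℕ, phiNorm φ (A ∪ B) ≤ φ (A \ Set.Iio n) + φ (B \ Set.Iio m) := by
    intro n m
    refine le_trans (iInf_le _ (max n m)) (le_trans (hφ.2.1 _ _ ?_) (hφ.2.2.1 _ _))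
    rintro x ⟨hx | hx, hxlt⟩
    · exact Or.inl ⟨hx, fun hlt => hxlt (lt_of_lt_of_le hlt (le_max_left n m))⟩
    · exact Or.inr ⟨hx, fun hlt => hxlt (lt_of_lt_of_le hlt (le_max_right n m))⟩
  show phiNorm φ (A ∪ B) ≤ (⨅ n, φ (A \ Set.Iio n)) + ⨅ m, φ (B \ Set.Iio m)
  rw [ENNReal.iInf_add]
  refine le_iInf fun n => ?_
  rw [ENNReal.add_iInf]
  exact le_iInf fun m => key n m

lemma phi_finset_iUnion_le (hφ : IsLSCSubmeasure φ) (f : ℕ → Set ℕ) (s : Finset ℕ) :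
    φ (⋃ k ∈ s, f k) ≤ ∑ k ∈ s, φ (f k) := by
  classical
  induction s using Finset.induction with
  | empty => simp [hφ.1]
  | @insert a s ha ih =>
      rw [Finset.sum_insert ha]
      have : (⋃ k ∈ insert a s, f k) = f a ∪ ⋃ k ∈ s, f k := by
        simp [Set.biUnion_insert]
      rw [this]
      exact le_trans (hφ.2.2.1 _ _) (add_le_add_right ih _)

lemma phi_iUnion_gt_le (hφ : IsLSCSubmeasure φ) (f : ℕ → Set ℕ) (n : ℕ) (c : ℝ≥0∞)
    (h : ∀ N : ℕ, ∑ k ∈ Finset.Ioc n N, φ (f k) ≤ c) :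
    φ (⋃ j > n, f j) ≤ c := by
  refine le_of_tendsto (hφ.2.2.2 _) (Filter.Eventually.of_forall fun m => ?_)
  classical
  have hch : ∀ x : ℕ, ∃ k : ℕ, (∃ j, n < j ∧ x ∈ f j) → (n < k ∧ x ∈ f k) := by
    intro x
    by_cases hx : ∃ j, n < j ∧ x ∈ f j
    · obtain ⟨j, hj⟩ := hx; exact ⟨j, fun _ => hj⟩
    · exact ⟨0, fun hc => absurd hc hx⟩
  choose g hg using hch
  set N : ℕ := (Finset.range m).sup g with hN
  have hcover : (⋃ j > n, f j) ∩ Set.Iio m ⊆ ⋃ k ∈ Finset.Ioc n N, f k := by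
    rintro x ⟨hxU, hxm⟩
    simp only [Set.mem_iUnion] at hxU
    obtain ⟨j, hj, hxj⟩ := hxU
    obtain ⟨hg1, hg2⟩ := hg x ⟨j, hj, hxj⟩
    have hle : g x ≤ N := Finset.le_sup (Finset.mem_range.mpr hxm)
    exact Set.mem_iUnion₂.mpr ⟨g x, Finset.mem_Ioc.mpr ⟨hg1, hle⟩, hg2⟩
  calc φ ((⋃ j > n, f j) ∩ Set.Iio m) ≤ φ (⋃ k ∈ Finset.Ioc n N, f k) := hφ.2.1 _ _ hcover
    _ ≤ ∑ k ∈ Finset.Ioc n N, φ (f k) := phi_finset_iUnion_le hφ f _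
    _ ≤ c := h N

end Aux

/-- if `I_φ` is not `F_σ` (via Solecki's characterization), there
is a partition `{A n}` of ℕ with `‖A n‖_φ > 0` and `‖⋃_{k>n} A k‖_φ → 0`. -/
theorem stmt9 (φ : Set ℕ → ℝ≥0∞) (hφ : IsLSCSubmeasure φ) (hfin : φ Set.univ < ⊤)
    (hnotFσ : ∀ ε : ℝ≥0∞, 0 < ε →
      ∃ M : Set ℕ, 0 < phiNorm φ M ∧ phiNorm φ M ≤ φ M ∧ φ M < ε) :
    ∃ A : ℕ → Set ℕ, Pairwise (Function.onFun Disjoint A) ∧ (⋃ n, A n) = Set.univ ∧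
      (∀ n, 0 < phiNorm φ (A n)) ∧
      Tendsto (fun n => phiNorm φ (⋃ k > n, A k)) atTop (𝓝 0) := by
  classical
  -- choice function
  have hex : ∀ ε : ℝ≥0∞, ∃ M : Set ℕ,
      0 < ε → (0 < phiNorm φ M ∧ phiNorm φ M ≤ φ M ∧ φ M < ε) := by
    intro ε
    by_cases h : 0 < ε
    · obtain ⟨M, hM⟩ := hnotFσ ε h; exact ⟨M, fun _ => hM⟩
    · exact ⟨∅, fun hc => absurd hc h⟩
  choose F hF using hex
  -- recursive budgets
  obtain ⟨b, hb0, hbs'⟩ : ∃ b : ℕ → ℝ≥0∞, b 0 = 1 ∧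
      ∀ k, b (k + 1) = min (b k) (phiNorm φ (F (b k))) * 2⁻¹ * 2⁻¹ :=
    ⟨fun k => Nat.rec (motive := fun _ => ℝ≥0∞) 1
      (fun _ bk => min bk (phiNorm φ (F bk)) * 2⁻¹ * 2⁻¹) k, rfl, fun k => rfl⟩
  set M : ℕ → Set ℕ := fun k => F (b k) with hMdef
  have hbs : ∀ k, b (k + 1) = min (b k) (phiNorm φ (M k)) * 2⁻¹ * 2⁻¹ := hbs'
  have h2inv0 : (2⁻¹ : ℝ≥0∞) ≠ 0 := ENNReal.inv_ne_zero.mpr ENNReal.ofNat_ne_top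
  have h2ne0 : (2 : ℝ≥0∞) ≠ 0 := two_ne_zero
  have hbpos : ∀ k, 0 < b k := by
    intro k
    induction k with
    | zero => rw [hb0]; exact one_pos
    | succ k ih =>
        rw [hbs k, pos_iff_ne_zero]
        have hMk : 0 < phiNorm φ (M k) := (hF (b k) ih).1
        exact mul_ne_zero (mul_ne_zero (lt_min ih hMk).ne' h2inv0) h2inv0
  have hMspec : ∀ k, 0 < phiNorm φ (M k) ∧ phiNorm φ (M k) ≤ φ (M k) ∧ φ (M k) < b k :=
    fun k => hF (b k) (hbpos k)
  have hq : ∀ x : ℝ≥0∞, 2 * (x * 2⁻¹ * 2⁻¹) = x * 2⁻¹ := by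
    intro x
    rw [mul_comm (2 : ℝ≥0∞), mul_assoc, ENNReal.inv_mul_cancel h2ne0 ENNReal.ofNat_ne_top, mul_one]
  have hhalf_le : ∀ x : ℝ≥0∞, x * 2⁻¹ ≤ x := by
    intro x
    calc x * 2⁻¹ ≤ x * 1 := mul_le_mul_right (ENNReal.inv_le_one.mpr one_le_two) x
      _ = x := mul_one x
  have h2 : ∀ k, 2 * b (k + 1) ≤ b k := by
    intro k
    rw [hbs k, hq]
    exact le_trans (hhalf_le _) (min_le_left _ _)
  have hMn : ∀ n, 2 * b (n + 1) ≤ phiNorm φ (M n) * 2⁻¹ := by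
    intro n
    rw [hbs n, hq]
    exact mul_le_mul_left (min_le_right _ _) _
  have hbhalf : ∀ k, b (k + 1) ≤ 2⁻¹ * b k := by
    intro k
    calc b (k + 1) = 2⁻¹ * (2 * b (k + 1)) := by
          rw [← mul_assoc, ENNReal.inv_mul_cancel h2ne0 ENNReal.ofNat_ne_top, one_mul]
      _ ≤ 2⁻¹ * b k := mul_le_mul_right (h2 k) _
  have hbpow : ∀ k, b k ≤ 2⁻¹ ^ k := by
    intro k
    induction k with
    | zero => rw [pow_zero, hb0]
    | succ k ih =>
        calc b (k + 1) ≤ 2⁻¹ * b k := hbhalf k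
          _ ≤ 2⁻¹ * 2⁻¹ ^ k := mul_le_mul_right ih _
          _ = 2⁻¹ ^ (k + 1) := by rw [pow_succ, mul_comm]
  have hbtop : ∀ k, b k < ⊤ := by
    intro k
    refine lt_of_le_of_lt (le_trans (hbpow k) (pow_le_one' (ENNReal.inv_le_one.mpr one_le_two) k)) ?_
    exact ENNReal.one_lt_top
  -- tail sums of budgets
  have hsumkey : ∀ n L, (∑ k ∈ Finset.Ioc n (n + L), b k) + 2 * b (n + L + 1) ≤ 2 * b (n + 1) := by
    intro n L
    induction L with
    | zero => simp
    | succ L ih =>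
        have hrw : (∑ k ∈ Finset.Ioc n (n + L + 1), b k)
            = (∑ k ∈ Finset.Ioc n (n + L), b k) + b (n + L + 1) :=
          Finset.sum_Ioc_succ_top (Nat.le_add_right n L) b
        have hstep : b (n + L + 1) + 2 * b (n + L + 1 + 1) ≤ 2 * b (n + L + 1) := by
          calc b (n + L + 1) + 2 * b (n + L + 1 + 1)
              ≤ b (n + L + 1) + b (n + L + 1) := add_le_add_right (h2 _) _
            _ = 2 * b (n + L + 1) := (two_mul _).symm
        calc (∑ k ∈ Finset.Ioc n (n + (L + 1)), b k) + 2 * b (n + (L + 1) + 1)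
            = (∑ k ∈ Finset.Ioc n (n + L), b k) + (b (n + L + 1) + 2 * b (n + L + 1 + 1)) := by
              rw [show n + (L + 1) = n + L + 1 by ring, hrw, add_assoc]
          _ ≤ (∑ k ∈ Finset.Ioc n (n + L), b k) + 2 * b (n + L + 1) := add_le_add_right hstep _
          _ ≤ 2 * b (n + 1) := ih
  have hsum : ∀ n N, (∑ k ∈ Finset.Ioc n N, b k) ≤ 2 * b (n + 1) := by
    intro n N
    rcases le_or_gt N n with h | h
    · rw [Finset.Ioc_eq_empty (not_lt.mpr h)]; simp
    · have hN : N = n + (N - n) := by omega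
      rw [hN]
      exact le_trans le_self_add (hsumkey n (N - n))
  -- the union bound
  have hU : ∀ n, φ (⋃ j > n, M j) ≤ 2 * b (n + 1) := by
    intro n
    refine phi_iUnion_gt_le hφ M n _ fun N => ?_
    exact le_trans (Finset.sum_le_sum fun k _ => (hMspec k).2.2.le) (hsum n N)
  -- the almost-disjointified pieces
  set A' : ℕ → Set ℕ := fun k => M k \ ⋃ j > k, M j with hA'def
  have hA'M : ∀ k, A' k ⊆ M k := fun k => Set.diff_subset
  have hA'pos : ∀ n, 0 < phiNorm φ (A' n) := by
    intro n
    have hMsub : M n ⊆ A' n ∪ ⋃ j > n, M j := by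
      intro x hx
      by_cases hxU : x ∈ ⋃ j > n, M j
      · exact Or.inr hxU
      · exact Or.inl ⟨hx, hxU⟩
    have h1 : phiNorm φ (M n) ≤ phiNorm φ (A' n) + φ (⋃ j > n, M j) :=
      le_trans (phiNorm_mono hφ hMsub)
        (le_trans (phiNorm_union_le hφ _ _) (add_le_add_right (phiNorm_le_phi φ _) _))
    rw [pos_iff_ne_zero]
    intro h0
    rw [h0, zero_add] at h1
    have hne0 : phiNorm φ (M n) ≠ 0 := (hMspec n).1.ne'
    have hnetop : phiNorm φ (M n) ≠ ⊤ :=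
      (lt_of_le_of_lt (hMspec n).2.1 (lt_of_lt_of_le (hMspec n).2.2 (hbtop n).le)).ne
    have hlt : phiNorm φ (M n) * 2⁻¹ < phiNorm φ (M n) := by
      calc phiNorm φ (M n) * 2⁻¹ = phiNorm φ (M n) / 2 := by rw [div_eq_mul_inv]
        _ < phiNorm φ (M n) := ENNReal.half_lt_self hne0 hnetop
    exact absurd (le_trans h1 (le_trans (hU n) (hMn n))) (not_le.mpr hlt)
  set S : Set ℕ := ⋃ k ≥ 1, A' k with hSdef
  set A : ℕ → Set ℕ := fun n => if n = 0 then (Set.univ \ S) ∪ A' 0 else A' n with hAdef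
  have hA0 : A 0 = (Set.univ \ S) ∪ A' 0 := if_pos rfl
  have hAn : ∀ n, n ≠ 0 → A n = A' n := fun n hn => if_neg hn
  have hd : ∀ m n, m < n → Disjoint (A' m) (A' n) := by
    intro m n h
    rw [Set.disjoint_left]
    rintro x ⟨hxM, hxU⟩ hxn
    exact hxU (Set.mem_iUnion₂.mpr ⟨n, h, hA'M n hxn⟩)
  have hA'S : ∀ n, n ≠ 0 → A' n ⊆ S := fun n hn x hx =>
    Set.mem_iUnion₂.mpr ⟨n, Nat.one_le_iff_ne_zero.mpr hn, hx⟩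
  have hdisj : ∀ m n, m < n → Disjoint (A m) (A n) := by
    intro m n h
    have hn : n ≠ 0 := by omega
    rcases Nat.eq_zero_or_pos m with hm | hm
    · subst hm
      rw [hA0, hAn n hn, Set.disjoint_union_left]
      constructor
      · rw [Set.disjoint_left]
        rintro x ⟨-, hxS⟩ hxn
        exact hxS (hA'S n hn hxn)
      · exact hd 0 n h
    · rw [hAn m (by omega), hAn n hn]
      exact hd m n h
  refine ⟨A, ?_, ?_, ?_, ?_⟩
  · intro m n hmn
    rcases hmn.lt_or_gt with h | h
    · exact hdisj m n h
    · exact (hdisj n m h).symm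
  · ext x
    simp only [Set.mem_iUnion, Set.mem_univ, iff_true]
    by_cases hx : x ∈ S
    · obtain ⟨k, hk, hxk⟩ := Set.mem_iUnion₂.mp hx
      exact ⟨k, by rw [hAn k (by omega)]; exact hxk⟩
    · exact ⟨0, by rw [hA0]; exact Or.inl ⟨trivial, hx⟩⟩
  · intro n
    rcases Nat.eq_zero_or_pos n with hn | hn
    · subst hn
      rw [hA0]
      exact lt_of_lt_of_le (hA'pos 0) (phiNorm_mono hφ Set.subset_union_right)
    · rw [hAn n (by omega)]
      exact hA'pos n
  · have htail : ∀ n, (⋃ k > n, A k) ⊆ ⋃ j > n, M j := by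
      intro n x hx
      obtain ⟨k, hk, hxk⟩ := Set.mem_iUnion₂.mp hx
      rw [hAn k (by omega)] at hxk
      exact Set.mem_iUnion₂.mpr ⟨k, hk, hA'M k hxk⟩
    have hle : ∀ n, phiNorm φ (⋃ k > n, A k) ≤ 2⁻¹ ^ n := by
      intro n
      calc phiNorm φ (⋃ k > n, A k) ≤ φ (⋃ j > n, M j) :=
            le_trans (phiNorm_mono hφ (htail n)) (phiNorm_le_phi φ _)
        _ ≤ 2 * b (n + 1) := hU n
        _ ≤ b n := h2 n
        _ ≤ 2⁻¹ ^ n := hbpow n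
    have hpow : Tendsto (fun n : ℕ => (2⁻¹ : ℝ≥0∞) ^ n) atTop (𝓝 0) :=
      ENNReal.tendsto_pow_atTop_nhds_zero_of_lt_one (ENNReal.inv_lt_one.mpr ENNReal.one_lt_two)
    exact tendsto_of_tendsto_of_tendsto_of_le_of_le tendsto_const_nhds hpow
      (fun n => zero_le) hle
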